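/- For every integer n ≥ 1, every permutation π of {0,1}^n, and every s ∈ [0,1], the ground state energy satisfies E_π(s)/n ≤ e(s). -/

import Mathlib

open scoped Classical

/-- Bit strings of length `n`. -/
abbrev BitStr (n : ℕ) := Fin n → Bool

/-- Hamming weight of a bit string. -/
def hamW {n : ℕ} (z : BitStr n) : ℕ := (Finset.univ.filter fun i => z i = true).card

/-- The adiabatic Hamiltonian `H_π(s)` for the scrambled Hamming-weight cost function:
diagonal entry `(1-s)·n/2 + s·W(π⁻¹ z)`, entry `-(1-s)/2` between strings differing in
exactly one bit, and `0` otherwise. -/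
noncomputable def Hpi (n : ℕ) (π : Equiv.Perm (BitStr n)) (s : ℝ) :
    Matrix (BitStr n) (BitStr n) ℝ :=
  Matrix.of fun z z' =>
    if z = z' then (1 - s) * n / 2 + s * hamW (π.symm z)
    else if (Finset.univ.filter fun i => z i ≠ z' i).card = 1 then -(1 - s) / 2
    else 0

/-- The eigenvalues of a (Hermitian) real symmetric matrix, sorted in nondecreasing
order and counted with multiplicity. Junk value `[]` if the matrix is not Hermitian. -/
noncomputable def sortedEigs {ι : Type*} [Fintype ι] [DecidableEq ι]
    (A : Matrix ι ι ℝ) : List ℝ :=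
  if h : A.IsHermitian then Multiset.sort (Finset.univ.val.map h.eigenvalues) (· ≤ ·)
  else []

/-- `E_π(s)`: the smallest eigenvalue of `H_π(s)`. -/
noncomputable def Epi (n : ℕ) (π : Equiv.Perm (BitStr n)) (s : ℝ) : ℝ :=
  (sortedEigs (Hpi n π s)).getD 0 0

/-- `E_{1,π}(s)`: the second-smallest eigenvalue of `H_π(s)`, counted with multiplicity. -/
noncomputable def E1pi (n : ℕ) (π : Equiv.Perm (BitStr n)) (s : ℝ) : ℝ :=
  (sortedEigs (Hpi n π s)).getD 1 0

/-- The spectral gap `γ_π(s)`. -/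
noncomputable def gapPi (n : ℕ) (π : Equiv.Perm (BitStr n)) (s : ℝ) : ℝ :=
  E1pi n π s - Epi n π s

/-- Probability of an event under a uniformly random permutation of `{0,1}^n`. -/
noncomputable def prPerm (n : ℕ) (P : Equiv.Perm (BitStr n) → Prop) : ℝ :=
  (Finset.univ.filter P).card / (Fintype.card (Equiv.Perm (BitStr n)))

/-- The asymptotic ground state energy density `e(s)`. -/
noncomputable def eFun (s : ℝ) : ℝ := if s ≤ 1/2 then s / 2 else (1 - s) / 2


open scoped Matrix RealInnerProductSpace

section Aux

lemma rayleigh_aux {ι : Type*} [Fintype ι] [DecidableEq ι]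
    {A : Matrix ι ι ℝ} (hA : A.IsHermitian) {c : ℝ}
    (hc : ∀ i, c ≤ hA.eigenvalues i) (v : ι → ℝ) :
    c * (v ⬝ᵥ v) ≤ v ⬝ᵥ (A *ᵥ v) := by
  set b := hA.eigenvectorBasis with hb
  set x : EuclideanSpace ℝ ι := (WithLp.equiv 2 (ι → ℝ)).symm v with hx
  set T := Matrix.toEuclideanLin A with hT
  have hsym : (Matrix.toEuclideanLin A).IsSymmetric :=
    Matrix.isHermitian_iff_isSymmetric.mp hA
  have hTb : ∀ i, T (b i) = hA.eigenvalues i • b i := by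
    intro i
    apply (WithLp.equiv 2 (ι → ℝ)).injective
    simpa [hT, Matrix.ofLp_toEuclideanLin_apply] using hA.mulVec_eigenvectorBasis i
  have key1 : ∑ i, (⟪b i, x⟫ * ⟪b i, x⟫) = ⟪x, x⟫ := by
    rw [← b.sum_inner_mul_inner x x]
    exact Finset.sum_congr rfl fun i _ => by rw [real_inner_comm x (b i)]
  have key2 : ⟪x, T x⟫ = ∑ i, hA.eigenvalues i * (⟪b i, x⟫ * ⟪b i, x⟫) := by
    rw [← b.sum_inner_mul_inner x (T x)]
    refine Finset.sum_congr rfl fun i _ => ?_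
    rw [← hsym (b i) x, hTb i, real_inner_smul_left, real_inner_comm x (b i)]
    ring
  have hle : c * ⟪x, x⟫ ≤ ⟪x, T x⟫ := by
    rw [key2, ← key1, Finset.mul_sum]
    exact Finset.sum_le_sum fun i _ =>
      mul_le_mul_of_nonneg_right (hc i) (mul_self_nonneg _)
  have e1 : ⟪x, x⟫ = v ⬝ᵥ v := rfl
  have e2 : ⟪x, T x⟫ = v ⬝ᵥ (A *ᵥ v) := by rw [real_inner_comm]; rfl
  rw [e1, e2] at hle
  exact hle

lemma filter_ne_update_aux {n : ℕ} (z : BitStr n) (i : Fin n) :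
    (Finset.univ.filter fun j => z j ≠ Function.update z i (!z i) j) = {i} := by
  ext j
  simp only [Finset.mem_filter, Finset.mem_univ, true_and, Finset.mem_singleton,
    Function.update_apply]
  by_cases h : j = i
  · subst h; simp
  · simp [h]

lemma update_inj_aux {n : ℕ} (z : BitStr n) :
    Function.Injective (fun i : Fin n => Function.update z i (!z i)) := by
  intro i i' h
  by_contra hne
  have h2 : Function.update z i (!z i) i = Function.update z i' (!z i') i := congrFun h i
  rw [Function.update_self, Function.update_of_ne hne] at h2
  cases hzi : z i <;> rw [hzi] at h2 <;> simp at h2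

lemma card_neighbors_aux {n : ℕ} (z : BitStr n) :
    (Finset.univ.filter fun z' : BitStr n =>
      (Finset.univ.filter fun i => z i ≠ z' i).card = 1).card = n := by
  have himg : (Finset.univ.filter fun z' : BitStr n =>
      (Finset.univ.filter fun i => z i ≠ z' i).card = 1)
      = Finset.univ.image (fun i : Fin n => Function.update z i (!z i)) := by
    ext z'
    simp only [Finset.mem_filter, Finset.mem_univ, true_and, Finset.mem_image]
    constructor
    · intro h
      obtain ⟨i, hi⟩ := Finset.card_eq_one.mp h
      refine ⟨i, ?_⟩
      have hmem : ∀ j, (z j ≠ z' j) ↔ j = i := by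
        intro j
        rw [← Finset.mem_singleton, ← hi]
        simp
      funext j
      rw [Function.update_apply]
      by_cases hj : j = i
      · subst hj
        rw [if_pos rfl]
        have hne := (hmem j).mpr rfl
        cases hz : z j <;> cases hz' : z' j <;> simp_all
      · rw [if_neg hj]
        by_contra hne
        exact hj ((hmem j).mp hne)
    · rintro ⟨i, rfl⟩
      rw [filter_ne_update_aux]
      simp
  rw [himg, Finset.card_image_of_injective _ (update_inj_aux z), Finset.card_univ,
    Fintype.card_fin]

lemma card_filter_true_aux {n : ℕ} (hn : 1 ≤ n) (i : Fin n) :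
    (Finset.univ.filter fun z : BitStr n => z i = true).card = 2 ^ (n - 1) := by
  have hflip : ∀ z : BitStr n, Function.update (Function.update z i (!z i)) i
      (!(Function.update z i (!z i) i)) = z := by
    intro z
    rw [Function.update_self, Function.update_idem, Bool.not_not, Function.update_eq_self]
  have hbij : (Finset.univ.filter fun z : BitStr n => z i = true).card
      = (Finset.univ.filter fun z : BitStr n => ¬ (z i = true)).card := by
    apply Finset.card_nbij' (fun z => Function.update z i (!z i))
      (fun z => Function.update z i (!z i))
    · intro z hz
      simp only [Finset.mem_coe, Finset.mem_filter, Finset.mem_univ, true_and] at hz ⊢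
      rw [Function.update_self, hz]
      simp
    · intro z hz
      simp only [Finset.mem_coe, Finset.mem_filter, Finset.mem_univ, true_and] at hz ⊢
      rw [Function.update_self]
      cases hzi : z i
      · simp
      · rw [hzi] at hz; simp at hz
    · intro z _
      exact hflip z
    · intro z _
      exact hflip z
  have htot := Finset.card_filter_add_card_filter_not
    (s := (Finset.univ : Finset (BitStr n))) (p := fun z : BitStr n => z i = true)
  rw [Finset.card_univ] at htot
  have hcard : Fintype.card (BitStr n) = 2 ^ n := by
    simp [Fintype.card_fun]
  rw [hcard, ← hbij] at htot
  have h2 : 2 ^ n = 2 * 2 ^ (n - 1) := by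
    cases n with
    | zero => exact absurd hn (by norm_num)
    | succ m => rw [Nat.succ_sub_one, pow_succ']
  rw [h2] at htot
  generalize (Finset.univ.filter fun z : BitStr n => z i = true).card = c at htot ⊢
  clear hflip hbij hcard h2
  omega

lemma sum_hamW_aux {n : ℕ} (hn : 1 ≤ n) :
    ∑ z : BitStr n, (hamW z : ℝ) = n * 2 ^ (n - 1) := by
  have h1 : ∀ z : BitStr n, (hamW z : ℝ)
      = ∑ i : Fin n, (if z i = true then (1:ℝ) else 0) := by
    intro z
    rw [hamW, Finset.card_filter]
    push_cast
    rfl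
  calc ∑ z : BitStr n, (hamW z : ℝ)
      = ∑ z : BitStr n, ∑ i : Fin n, (if z i = true then (1:ℝ) else 0) :=
        Finset.sum_congr rfl fun z _ => h1 z
    _ = ∑ i : Fin n, ∑ z : BitStr n, (if z i = true then (1:ℝ) else 0) := Finset.sum_comm
    _ = ∑ _i : Fin n, ((2:ℝ) ^ (n-1)) := Finset.sum_congr rfl (fun i _ => by
          rw [Finset.sum_boole, card_filter_true_aux hn i]; push_cast; rfl)
    _ = n * 2 ^ (n-1) := by
          rw [Finset.sum_const, Finset.card_univ, Fintype.card_fin, nsmul_eq_mul]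

lemma Hpi_herm_aux (n : ℕ) (π : Equiv.Perm (BitStr n)) (s : ℝ) :
    (Hpi n π s).IsHermitian := by
  rw [Matrix.IsHermitian]
  ext z z'
  simp only [Matrix.conjTranspose_apply, Hpi, Matrix.of_apply, star_trivial]
  by_cases h : z = z'
  · subst h; simp
  · rw [if_neg (Ne.symm h), if_neg h]
    have hfe : (Finset.univ.filter fun i => z' i ≠ z i)
        = (Finset.univ.filter fun i => z i ≠ z' i) := by
      ext i; simp [ne_comm]
    rw [hfe]

lemma Epi_le_eig_aux {n : ℕ} {π : Equiv.Perm (BitStr n)} {s : ℝ}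
    (h : (Hpi n π s).IsHermitian) (i : BitStr n) :
    Epi n π s ≤ h.eigenvalues i := by
  have hmem : h.eigenvalues i ∈ Multiset.sort (Finset.univ.val.map h.eigenvalues) (· ≤ ·) := by
    rw [Multiset.mem_sort]
    exact Multiset.mem_map_of_mem _ (Finset.mem_univ i)
  have hsorted : (Multiset.sort (Finset.univ.val.map h.eigenvalues) (· ≤ ·)).Pairwise (· ≤ ·) :=
    Multiset.pairwise_sort _ _
  rw [Epi, sortedEigs, dif_pos h]
  cases hcase : Multiset.sort (Finset.univ.val.map h.eigenvalues) (· ≤ ·) with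
  | nil => rw [hcase] at hmem; simp at hmem
  | cons a t =>
    rw [hcase] at hmem hsorted
    rw [List.getD_cons_zero]
    rcases List.mem_cons.mp hmem with h1 | h1
    · rw [← h1]
    · exact (List.pairwise_cons.mp hsorted).1 _ h1

lemma row_sum_aux {n : ℕ} (π : Equiv.Perm (BitStr n)) (s : ℝ) (z : BitStr n) :
    ∑ z' : BitStr n, Hpi n π s z z' = s * hamW (π.symm z) := by
  have hcn := card_neighbors_aux z
  have hdiag : Hpi n π s z z = (1 - s) * n / 2 + s * hamW (π.symm z) := by simp [Hpi]
  have hoff : ∑ z' ∈ Finset.univ.erase z, Hpi n π s z z' = n * (-(1 - s) / 2) := by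
    have hz' : ∀ z' ∈ Finset.univ.erase z, Hpi n π s z z'
        = if (Finset.univ.filter fun i => z i ≠ z' i).card = 1 then -(1 - s)/2 else 0 := by
      intro z' hz'
      have hne : z ≠ z' := (Finset.ne_of_mem_erase hz').symm
      simp [Hpi, hne]
    have hznot : z ∉ (Finset.univ.filter fun z' : BitStr n =>
        (Finset.univ.filter fun i => z i ≠ z' i).card = 1) := by
      simp
    rw [Finset.sum_congr rfl hz', ← Finset.sum_filter, Finset.filter_erase,
      Finset.erase_eq_of_notMem hznot, Finset.sum_const, hcn, nsmul_eq_mul]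
  rw [← Finset.add_sum_erase _ _ (Finset.mem_univ z), hdiag, hoff]
  ring

end Aux

/-- For every `n ≥ 1`, every permutation `π` of `{0,1}^n`, and every `s ∈ [0,1]`,
the ground state energy satisfies `E_π(s)/n ≤ e(s)`. -/
theorem stmt0 (n : ℕ) (hn : 1 ≤ n) (π : Equiv.Perm (BitStr n))
    (s : ℝ) (hs : s ∈ Set.Icc (0 : ℝ) 1) :
    Epi n π s / n ≤ eFun s := by
  obtain ⟨hs0, hs1⟩ := hs
  have hH := Hpi_herm_aux n π s
  have hnR : (0:ℝ) < n := by exact_mod_cast Nat.lt_of_lt_of_le Nat.zero_lt_one hn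
  rw [div_le_iff₀ hnR, eFun]
  have hray : ∀ v : BitStr n → ℝ, Epi n π s * (v ⬝ᵥ v) ≤ v ⬝ᵥ (Hpi n π s *ᵥ v) :=
    fun v => rayleigh_aux hH (fun i => Epi_le_eig_aux hH i) v
  by_cases hhalf : s ≤ 1/2
  · rw [if_pos hhalf]
    have h1 := hray (fun _ => 1)
    have hvv : ((fun _ : BitStr n => (1:ℝ)) ⬝ᵥ fun _ => (1:ℝ)) = 2 ^ n := by
      simp [dotProduct, Finset.card_univ, Fintype.card_fun]
    have hHv : ((fun _ : BitStr n => (1:ℝ)) ⬝ᵥ (Hpi n π s *ᵥ fun _ => (1:ℝ)))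
        = s * (n * 2 ^ (n-1)) := by
      have hrow : ∀ z : BitStr n, (Hpi n π s *ᵥ fun _ => (1:ℝ)) z
          = s * hamW (π.symm z) := by
        intro z
        have := row_sum_aux π s z
        simpa [Matrix.mulVec, dotProduct] using this
      calc ((fun _ : BitStr n => (1:ℝ)) ⬝ᵥ (Hpi n π s *ᵥ fun _ => (1:ℝ)))
          = ∑ z : BitStr n, s * (hamW (π.symm z) : ℝ) := by
            rw [dotProduct]
            exact Finset.sum_congr rfl fun z _ => by rw [one_mul, hrow z]
        _ = s * ∑ z : BitStr n, (hamW (π.symm z) : ℝ) := by rw [Finset.mul_sum]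
        _ = s * ∑ z : BitStr n, (hamW z : ℝ) := by
            rw [Equiv.sum_comp π.symm (fun z => (hamW z : ℝ))]
        _ = s * (n * 2 ^ (n-1)) := by rw [sum_hamW_aux hn]
    rw [hvv, hHv] at h1
    have hpow : (0:ℝ) < 2 ^ (n-1) := by positivity
    have h2n : (2:ℝ) ^ n = 2 * 2 ^ (n-1) := by
      cases n with
      | zero => exact absurd hn (by norm_num)
      | succ m => rw [Nat.succ_sub_one, pow_succ']
    rw [h2n] at h1
    nlinarith [h1, hpow]
  · rw [if_neg hhalf]
    set z0 := π (fun _ => false) with hz0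
    set v : BitStr n → ℝ := fun z => if z = z0 then 1 else 0 with hv
    have h2 := hray v
    have hvv : v ⬝ᵥ v = 1 := by
      simp [hv, dotProduct, ite_mul, mul_ite, mul_one, mul_zero]
    have hmul : ∀ z : BitStr n, (Hpi n π s *ᵥ v) z = Hpi n π s z z0 := by
      intro z
      simp [hv, Matrix.mulVec, dotProduct, mul_ite, mul_one, mul_zero]
    have hdiag : Hpi n π s z0 z0 = (1 - s) * n / 2 := by
      have hsymm : π.symm z0 = fun _ => false := by
        rw [hz0, Equiv.symm_apply_apply]
      have hw : hamW (π.symm z0) = 0 := by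
        rw [hsymm, hamW]
        simp
      simp [Hpi, hw]
    have hHv : v ⬝ᵥ (Hpi n π s *ᵥ v) = (1 - s) * n / 2 := by
      calc v ⬝ᵥ (Hpi n π s *ᵥ v) = ∑ z : BitStr n, v z * Hpi n π s z z0 := by
            rw [dotProduct]
            exact Finset.sum_congr rfl fun z _ => by rw [hmul z]
        _ = Hpi n π s z0 z0 := by
            simp [hv, ite_mul, one_mul, zero_mul]
        _ = (1 - s) * n / 2 := hdiag
    rw [hvv, hHv, mul_one] at h2
    linarith
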